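/- arXiv:1312.0838 — 2 statements merged into one kernel-verified Lean document; each statement's English description precedes it below -/
import Mathlib

section
/- Fix i ≠ j in I and an integer r ≥ 0, and define N₁(l) = e_{i,λ+lα_i+α_j}^{r-l} · e_{j,λ+lα_i} · e_{i,λ}^{l} · s_{ii}^{l(l+1)/2 + (r-l)(r-l+1)/2} for 0 ≤ l ≤ r, where e_{i,λ} = ∏_{k∈I} s_{ik}^{λ(k)}. Then N₁(l) = N₂ · s_{ij}^{-l} · s_{ji}^{l} where N₂ = N₁(0) is independent of l; equivalently, N₁(l) · s_{ij}^{l} · s_{ji}^{-l} is constant in l. -/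
/-- With `e_{i,λ} = ∏_k s_{ik}^{λ(k)}` and
`N₁(l) = e_{i,λ+lα_i+α_j}^{r-l} · e_{j,λ+lα_i} · e_{i,λ}^l · s_{ii}^{l(l+1)/2+(r-l)(r-l+1)/2}`,
one has `N₁(l) = N₁(0) · s_{ij}^{-l} · s_{ji}^{l}` for all `0 ≤ l ≤ r`. -/
theorem serre_scalar {I : Type*} [Fintype I] [DecidableEq I] {R : Type*} [CommRing R]
    (s : I → I → Rˣ) (lam : I → ℤ) (i j : I) (hij : i ≠ j) (r : ℕ)
    (N₁ : ℕ → Rˣ)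
    (hN₁ : ∀ l, N₁ l =
      (∏ k : I, s i k ^ ((lam + (l : ℤ) • Pi.single i 1 + Pi.single j 1 : I → ℤ) k)) ^ (r - l) *
      (∏ k : I, s j k ^ ((lam + (l : ℤ) • Pi.single i 1 : I → ℤ) k)) *
      (∏ k : I, s i k ^ (lam k)) ^ l *
      s i i ^ (l * (l + 1) / 2 + (r - l) * (r - l + 1) / 2)) :
    ∀ l ≤ r, N₁ l = N₁ 0 * s i j ^ (-(l : ℤ)) * s j i ^ (l : ℤ) := by
  intro l hl
  obtain ⟨m, rfl⟩ : ∃ m, r = l + m := ⟨r - l, (Nat.add_sub_cancel' hl).symm⟩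
  have prod_single : ∀ (a b : I) (c : ℤ),
      (∏ k : I, s a k ^ ((Pi.single b c : I → ℤ) k)) = s a b ^ c := by
    intro a b c
    rw [Fintype.prod_eq_single b]
    · simp
    · intro k hk; simp [Pi.single_eq_of_ne hk]
  have hsmul : ∀ l : ℕ, ((l : ℤ) • Pi.single i 1 : I → ℤ) = Pi.single i (l : ℤ) := by
    intro l; ext k; by_cases h : k = i <;> simp [h, Pi.single_apply]
  set A : Rˣ := ∏ k : I, s i k ^ lam k with hA
  set B : Rˣ := ∏ k : I, s j k ^ lam k with hB
  have h1 : ∀ l : ℕ,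
      (∏ k : I, s i k ^ ((lam + (l : ℤ) • Pi.single i 1 + Pi.single j 1 : I → ℤ) k))
        = A * s i i ^ l * s i j := by
    intro l
    simp only [hsmul, Pi.add_apply, zpow_add, Finset.prod_mul_distrib, prod_single, hA]
    simp
  have h2 : ∀ l : ℕ,
      (∏ k : I, s j k ^ ((lam + (l : ℤ) • Pi.single i 1 : I → ℤ) k)) = B * s j i ^ l := by
    intro l
    simp only [hsmul, Pi.add_apply, zpow_add, Finset.prod_mul_distrib, prod_single, hB]
    simp
  rw [hN₁ l, hN₁ 0, h1, h1, h2, h2]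
  simp only [pow_zero, mul_one, Nat.sub_zero, Nat.zero_mul, Nat.zero_div, Nat.zero_add,
    Nat.add_sub_cancel_left]
  have hexp : l * (l + 1) / 2 + m * (m + 1) / 2 + l * m = (l + m) * (l + m + 1) / 2 := by
    obtain ⟨a, ha⟩ := (Nat.even_mul_succ_self l).two_dvd
    obtain ⟨b, hb⟩ := (Nat.even_mul_succ_self m).two_dvd
    obtain ⟨c, hc⟩ := (Nat.even_mul_succ_self (l + m)).two_dvd
    have hrel : (l + m) * (l + m + 1) = l * (l + 1) + m * (m + 1) + 2 * (l * m) := by ring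
    omega
  have hz : ∀ a : Rˣ, a ^ (l : ℤ) = a ^ l := fun a => zpow_natCast a l
  rw [zpow_neg, hz, hz]
  conv_rhs => rw [mul_right_comm]
  rw [eq_mul_inv_iff_mul_eq, ← hexp, ← Units.val_inj]
  push_cast [Units.val_mul, Units.val_pow_eq_pow_val]
  ring
end

section
/- Let ψ be the map on generators defined by E'_{λ,λ-α_i} ↦ e_{i,λ} E_{λ,λ-α_i}, F'_{λ-α_i,λ} ↦ f_{i,λ} F_{λ-α_i,λ}, 1'_λ ↦ 1_λ, where e_{i,λ} = ∏_j s_{ij}^{λ(j)} and f_{i,λ} = ∏_j t_{ij}^{λ(j)}. Then ψ maps the commutator relation of Lusztig's modified algebra, E'_{λ,λ-α_i} F'_{λ-α_i,λ-α_i+α_j} - F'_{λ,λ+α_j} E'_{λ+α_j,λ+α_j-α_i} - δ_{ij}[λ_i]_{v_i} 1'_λ, to e_{i,λ} f_{j,λ-α_i+α_j} times the corresponding relation E_{λ,λ-α_i} F_{λ-α_i,λ-α_i+α_j} - s_{ij}t_{ji} F_{λ,λ+α_j} E_{λ+α_j,λ+α_j-α_i} - δ_{ij} c_{i,λ}[λ_i]_{q_i}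 1_λ of the twisted modified algebra, assuming q_i = v_i; in particular ψ sends the first relation to a unit multiple of the second. -/
noncomputable section

/-- Balanced quantum integer `[n]_q = (q^n - q^{-n})/(q - q^{-1})` in a field. -/
def qintF {K : Type*} [Field K] (q : K) (n : ℤ) : K := (q ^ n - q ^ (-n)) / (q - q⁻¹)

/-- Formal generators of the modified algebras: `E lam i` stands for `E_{λ,λ-α_i}`,
`F lam i` stands for `F_{λ-α_i,λ}`, and `one lam` stands for `1_λ`. -/
inductive MGen (I : Type*) : Type _
  | E : (I → ℤ) → I → MGen I
  | F : (I → ℤ) → I → MGen I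
  | one : (I → ℤ) → MGen I

open FreeAlgebra MGen

/-- The map `ψ` on generators: `E'_{λ,λ-α_i} ↦ e_{i,λ}E_{λ,λ-α_i}`,
`F'_{λ-α_i,λ} ↦ f_{i,λ}F_{λ-α_i,λ}`, `1'_λ ↦ 1_λ`, extended to the free algebra,
where `e_{i,λ} = ∏_j s_{ij}^{λ(j)}`, `f_{i,λ} = ∏_j t_{ij}^{λ(j)}`. -/
def psi {I : Type*} [Fintype I] {K : Type*} [Field K] (s t : I → I → Kˣ) :
    FreeAlgebra K (MGen I) →ₐ[K] FreeAlgebra K (MGen I) :=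
  FreeAlgebra.lift K fun g =>
    match g with
    | E lam i => ((∏ j : I, s i j ^ (lam j) : Kˣ) : K) • ι K (E lam i)
    | F lam i => ((∏ j : I, t i j ^ (lam j) : Kˣ) : K) • ι K (F lam i)
    | one lam => ι K (one lam)

lemma prod_zpow_single {I : Type*} [Fintype I] [DecidableEq I] {G : Type*} [CommGroup G]
    (u : I → G) (j : I) (n : ℤ) : ∏ k : I, u k ^ ((Pi.single j n : I → ℤ) k) = u j ^ n := by
  rw [Finset.prod_eq_single j]
  · rw [Pi.single_eq_same]
  · intro b _ hb; rw [Pi.single_eq_of_ne hb, zpow_zero]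
  · simp

lemma prod_zpow_add {I : Type*} [Fintype I] {G : Type*} [CommGroup G]
    (u : I → G) (a b : I → ℤ) :
    ∏ k : I, u k ^ (a k + b k) = (∏ k : I, u k ^ a k) * ∏ k : I, u k ^ b k := by
  rw [← Finset.prod_mul_distrib]
  exact Finset.prod_congr rfl fun k _ => zpow_add (u k) (a k) (b k)

lemma prod_zpow_sub {I : Type*} [Fintype I] {G : Type*} [CommGroup G]
    (u : I → G) (a b : I → ℤ) :
    ∏ k : I, u k ^ (a k - b k) = (∏ k : I, u k ^ a k) * (∏ k : I, u k ^ b k)⁻¹ := by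
  rw [← Finset.prod_inv_distrib, ← Finset.prod_mul_distrib]
  exact Finset.prod_congr rfl fun k _ => by rw [zpow_sub]

/-- `ψ` maps the commutator relation
`E'_{λ,λ-α_i}F'_{λ-α_i,λ-α_i+α_j} - F'_{λ,λ+α_j}E'_{λ+α_j,λ+α_j-α_i} - δ_{ij}[λ_i]_{v_i}1'_λ`
of Lusztig's modified algebra to the unit multiple `e_{i,λ}·f_{j,λ-α_i+α_j}` of the
corresponding relation
`E_{λ,λ-α_i}F_{λ-α_i,λ-α_i+α_j} - s_{ij}t_{ji}F_{λ,λ+α_j}E_{λ+α_j,λ+α_j-α_i} - δ_{ij}c_{i,λ}[λ_i]_{q_i}1_λ`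
of the twisted modified algebra (with `q_i = v_i = v^{d_i}`). -/
theorem psi_commutator_relation {I : Type*} [Fintype I] [DecidableEq I]
    {K : Type*} [Field K] (v : K) (d : I → ℤ) (s t : I → I → Kˣ)
    (lam : I → ℤ) (i j : I) :
    psi s t
        (ι K (E lam i) * ι K (F (lam - Pi.single i 1 + Pi.single j 1 : I → ℤ) j)
          - ι K (F (lam + Pi.single j 1 : I → ℤ) j)
              * ι K (E (lam + Pi.single j 1 : I → ℤ) i)
          - (if i = j then (1 : K) else 0) • qintF (v ^ d i) (lam i) • ι K (one lam)) =
      (((∏ k : I, s i k ^ (lam k)) *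
          (∏ k : I, t j k ^ ((lam - Pi.single i 1 + Pi.single j 1 : I → ℤ) k)) : Kˣ) : K) •
        (ι K (E lam i) * ι K (F (lam - Pi.single i 1 + Pi.single j 1 : I → ℤ) j)
          - ((s i j * t j i : Kˣ) : K) •
              (ι K (F (lam + Pi.single j 1 : I → ℤ) j)
                * ι K (E (lam + Pi.single j 1 : I → ℤ) i))
          - (if i = j then (1 : K) else 0) •
              ((((∏ k : I, (s i k * t i k) ^ (-(lam k)) : Kˣ) : K)
                * qintF (v ^ d i) (lam i)) • ι K (one lam))) := by
  simp only [psi, map_sub, map_mul, map_smul, lift_ι_apply, smul_mul_smul_comm, smul_smul,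
    mul_smul_comm, smul_mul_assoc]
  match_scalars
  · ring
  · simp only [mul_one, mul_neg, neg_inj]
    norm_cast
    simp only [Pi.add_apply, Pi.sub_apply, prod_zpow_add, prod_zpow_sub, prod_zpow_single,
      zpow_one]
    simp [mul_comm, mul_left_comm, mul_assoc]
  · rcases eq_or_ne i j with rfl | hij
    · simp only [if_pos rfl, if_true, eq_self_iff_true, one_mul, mul_one, sub_add_cancel, mul_neg, neg_inj]
      have hu : (∏ k : I, s i k ^ lam k) * (∏ k : I, t i k ^ lam k)
          * ∏ k : I, (s i k * t i k) ^ (-lam k) = (1 : Kˣ) := by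
        rw [← Finset.prod_mul_distrib, ← Finset.prod_mul_distrib]
        refine Finset.prod_eq_one fun k _ => ?_
        rw [zpow_neg, mul_zpow, mul_inv_cancel]
      have hk := congrArg Units.val hu
      push_cast at hk
      linear_combination (-qintF (v ^ d i) (lam i)) * hk
    · simp [hij]

end
end
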